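/- Let f ∈ H² be an outer function and w ∈ 𝔻. Then the local Dirichlet integral 𝒟_w(f) = ∫_𝕋 (|f(ζ)|² − |f(w)|²)/|ζ − w|² dm(ζ) satisfies (1 − |w|²) 𝒟_w(f) = ∫_𝕋 |f|² dσ_w − exp(∫_𝕋 2 log|f| dσ_w), where dσ_w(ζ) = (1−|w|²)/|ζ−w|² dm(ζ) is the harmonic (Poisson) probability measure at w and m is normalized Lebesgue measure on 𝕋. -/

import Mathlib

open MeasureTheory Complex Real

/-- The normalized Lebesgue measure on the circle, parametrized by θ ∈ (0, 2π]. -/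
noncomputable def circMeasure : Measure ℝ :=
  (ENNReal.ofReal (2 * π))⁻¹ • (volume.restrict (Set.Ioc 0 (2 * π)))

lemma circ_abs (θ : ℝ) : ‖Complex.exp (θ * Complex.I)‖ = 1 :=
  Complex.norm_exp_ofReal_mul_I θ

lemma circ_lb {w : ℂ} (hw : ‖w‖ < 1) (θ : ℝ) :
    1 - ‖w‖ ≤ ‖Complex.exp (θ * Complex.I) - w‖ := by
  have := norm_sub_norm_le (Complex.exp (θ * Complex.I)) w
  simpa [circ_abs θ] using this

lemma circ_sub_ne {w : ℂ} (hw : ‖w‖ < 1) (θ : ℝ) :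
    Complex.exp (θ * Complex.I) - w ≠ 0 := by
  intro h
  have := circ_lb hw θ
  rw [h] at this
  simp at this
  linarith

lemma circ_abs_pos {w : ℂ} (hw : ‖w‖ < 1) (θ : ℝ) :
    0 < ‖Complex.exp (θ * Complex.I) - w‖ := by
  have := circ_lb hw θ; linarith

lemma poisson_re {w : ℂ} (hw : ‖w‖ < 1) (θ : ℝ) :
    ((Complex.exp (θ * Complex.I) + w) / (Complex.exp (θ * Complex.I) - w)).re
      = (1 - ‖w‖ ^ 2) / ‖Complex.exp (θ * Complex.I) - w‖ ^ 2 := by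
  set ζ := Complex.exp (θ * Complex.I) with hζ
  have h1 : Complex.normSq ζ = 1 := by
    rw [← Complex.sq_norm, circ_abs θ]; norm_num
  rw [Complex.div_re, Complex.sq_norm, Complex.sq_norm, ← add_div]
  congr 1
  simp only [Complex.normSq_apply, Complex.add_re, Complex.add_im, Complex.sub_re,
    Complex.sub_im] at h1 ⊢
  linear_combination h1

lemma cont_exp_circ : Continuous fun θ : ℝ => Complex.exp (θ * Complex.I) :=
  Complex.continuous_exp.comp (Complex.continuous_ofReal.mul continuous_const)

lemma poisson_integral_one {w : ℂ} (hw : ‖w‖ < 1) :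
    (∫ θ, (1 - ‖w‖ ^ 2) / ‖Complex.exp (θ * Complex.I) - w‖ ^ 2
      ∂circMeasure) = 1 := by
  have hπ : (0 : ℝ) < 2 * π := by positivity
  have hwmem : w ∈ Metric.ball (0 : ℂ) 1 := by
    simpa [Metric.mem_ball, Complex.dist_eq] using hw
  have hcirc := circleIntegral.integral_sub_inv_of_mem_ball hwmem
  rw [circleIntegral] at hcirc
  simp only [deriv_circleMap, circleMap, Complex.ofReal_one, Complex.ofReal_zero, zero_add,
    one_mul, smul_eq_mul] at hcirc
  -- hcirc : ∫ θ in 0..2π, exp(θI) * I * (exp(θI) - w)⁻¹ = 2πI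
  have hcont2 : Continuous fun θ : ℝ => Complex.exp (θ * Complex.I) - w :=
    cont_exp_circ.sub continuous_const
  have hcont3 : Continuous fun θ : ℝ =>
      Complex.exp (θ * Complex.I) * (Complex.exp (θ * Complex.I) - w)⁻¹ :=
    cont_exp_circ.mul (hcont2.inv₀ fun θ => circ_sub_ne hw θ)
  have hmul : (∫ θ in (0:ℝ)..2 * π,
      Complex.exp (θ * Complex.I) * (Complex.exp (θ * Complex.I) - w)⁻¹) = 2 * π := by
    apply mul_left_cancel₀ Complex.I_ne_zero
    rw [← intervalIntegral.integral_const_mul]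
    have : ∀ θ : ℝ, Complex.I * (Complex.exp (θ * Complex.I) *
        (Complex.exp (θ * Complex.I) - w)⁻¹)
        = Complex.exp (θ * Complex.I) * Complex.I * (Complex.exp (θ * Complex.I) - w)⁻¹ := by
      intro θ; ring
    rw [intervalIntegral.integral_congr fun θ _ => this θ]
    rw [hcirc]; ring
  have hfrac : (∫ θ in (0:ℝ)..2 * π,
      (Complex.exp (θ * Complex.I) + w) / (Complex.exp (θ * Complex.I) - w)) = 2 * π := by
    have hco : ∀ θ : ℝ, (Complex.exp (θ * Complex.I) + w) / (Complex.exp (θ * Complex.I) - w)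
        = 2 * (Complex.exp (θ * Complex.I) * (Complex.exp (θ * Complex.I) - w)⁻¹) - 1 := by
      intro θ
      have hne := circ_sub_ne hw θ
      field_simp
      ring
    rw [intervalIntegral.integral_congr fun θ _ => hco θ]
    rw [intervalIntegral.integral_sub ((show Continuous fun θ : ℝ => (2:ℂ) * (Complex.exp (θ * Complex.I) * (Complex.exp (θ * Complex.I) - w)⁻¹) from continuous_const.mul hcont3).intervalIntegrable _ _)
      (intervalIntegrable_const), intervalIntegral.integral_const_mul, hmul,
      intervalIntegral.integral_const]
    simp
    ring
  have hre : (∫ θ in (0:ℝ)..2 * π,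
      ((Complex.exp (θ * Complex.I) + w) / (Complex.exp (θ * Complex.I) - w)).re) = 2 * π := by
    have hcont4 : Continuous fun θ : ℝ =>
        (Complex.exp (θ * Complex.I) + w) / (Complex.exp (θ * Complex.I) - w) :=
      (cont_exp_circ.add continuous_const).div hcont2 fun θ => circ_sub_ne hw θ
    have := Complex.reCLM.intervalIntegral_comp_comm (μ := volume)
      (hcont4.intervalIntegrable 0 (2 * π))
    simp only [Complex.reCLM_apply] at this
    rw [this, hfrac]
    simp
  rw [circMeasure, integral_smul_measure, ENNReal.toReal_inv, ENNReal.toReal_ofReal hπ.le,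
    smul_eq_mul]
  rw [← intervalIntegral.integral_of_le hπ.le]
  rw [intervalIntegral.integral_congr fun θ _ => (poisson_re hw θ).symm, hre]
  field_simp

/-- Carleson–Richter–Sundberg type formula for the local Dirichlet integral of an
outer function: `(1 − |w|²) 𝒟_w(f) = ∫_𝕋 |f|² dσ_w − exp(∫_𝕋 2 log|f| dσ_w)`.
Here `u θ = log |f(e^{iθ})|` is the boundary log-modulus of the outer function `f`,
so that the boundary values satisfy `|f(e^{iθ})|² = exp (2 u θ)`, and
`dσ_w(θ) = (1−|w|²)/|e^{iθ}−w|² dm(θ)` is the Poisson probability measure at `w`. -/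
theorem stmt_15 (u : ℝ → ℝ)
    (hu : Integrable u circMeasure)
    (hH2 : Integrable (fun θ => Real.exp (2 * u θ)) circMeasure)
    (f : ℂ → ℂ)
    (houter : ∀ z : ℂ, ‖z‖ < 1 →
      f z = Complex.exp (∫ θ, ((Complex.exp (θ * Complex.I) + z) /
        (Complex.exp (θ * Complex.I) - z)) * (u θ : ℂ) ∂circMeasure))
    (w : ℂ) (hw : ‖w‖ < 1) :
    (1 - ‖w‖ ^ 2) *
      (∫ θ, (Real.exp (2 * u θ) - ‖f w‖ ^ 2) /
        ‖Complex.exp (θ * Complex.I) - w‖ ^ 2 ∂circMeasure) =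
    (∫ θ, Real.exp (2 * u θ) *
        ((1 - ‖w‖ ^ 2) / ‖Complex.exp (θ * Complex.I) - w‖ ^ 2)
      ∂circMeasure) -
    Real.exp (∫ θ, (2 * u θ) *
        ((1 - ‖w‖ ^ 2) / ‖Complex.exp (θ * Complex.I) - w‖ ^ 2)
      ∂circMeasure) := by
  have hπ : (0 : ℝ) < 2 * π := by positivity
  haveI hfin : IsFiniteMeasure circMeasure := by
    constructor
    rw [circMeasure]
    simp only [Measure.smul_apply, Measure.restrict_apply, MeasurableSet.univ,
      Set.univ_inter, Real.volume_Ioc, smul_eq_mul, sub_zero]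
    exact ENNReal.mul_lt_top (ENNReal.inv_lt_top.2 (by simp [hπ, Real.pi_pos])) ENNReal.ofReal_lt_top
  have hcpos : 0 < 1 - ‖w‖ := by linarith
  -- continuity & boundedness of the Poisson kernel
  have hcontd : Continuous fun θ : ℝ => ‖Complex.exp (θ * Complex.I) - w‖ ^ 2 :=
    (continuous_norm.comp (cont_exp_circ.sub continuous_const)).pow 2
  have hcontP : Continuous fun θ : ℝ =>
      (1 - ‖w‖ ^ 2) / ‖Complex.exp (θ * Complex.I) - w‖ ^ 2 :=
    continuous_const.div hcontd fun θ => pow_ne_zero 2 (circ_abs_pos hw θ).ne'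
  have hPbd : ∀ θ : ℝ, ‖(1 - ‖w‖ ^ 2) /
      ‖Complex.exp (θ * Complex.I) - w‖ ^ 2‖
      ≤ (1 - ‖w‖ ^ 2) / (1 - ‖w‖) ^ 2 := by
    intro θ
    have h1 : (0:ℝ) < ‖Complex.exp (θ * Complex.I) - w‖ ^ 2 :=
      pow_pos (circ_abs_pos hw θ) 2
    have h2 : (1 - ‖w‖) ^ 2 ≤ ‖Complex.exp (θ * Complex.I) - w‖ ^ 2 :=
      pow_le_pow_left₀ hcpos.le (circ_lb hw θ) 2
    have hnum : (0:ℝ) ≤ 1 - ‖w‖ ^ 2 := by nlinarith [norm_nonneg w]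
    rw [Real.norm_eq_abs, _root_.abs_of_nonneg (div_nonneg hnum h1.le)]
    exact div_le_div_of_nonneg_left hnum (pow_pos hcpos 2) h2
  have hPint : Integrable (fun θ : ℝ =>
      (1 - ‖w‖ ^ 2) / ‖Complex.exp (θ * Complex.I) - w‖ ^ 2)
      circMeasure :=
    Integrable.mono' (integrable_const _) hcontP.aestronglyMeasurable (ae_of_all _ hPbd)
  have hEP : Integrable (fun θ : ℝ => Real.exp (2 * u θ) *
      ((1 - ‖w‖ ^ 2) / ‖Complex.exp (θ * Complex.I) - w‖ ^ 2))
      circMeasure := by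
    have := hH2.bdd_mul hcontP.aestronglyMeasurable (ae_of_all _ hPbd)
    exact this.congr (ae_of_all _ fun θ => by ring)
  have huP : Integrable (fun θ : ℝ => 2 * u θ *
      ((1 - ‖w‖ ^ 2) / ‖Complex.exp (θ * Complex.I) - w‖ ^ 2))
      circMeasure := by
    have := (hu.const_mul 2).bdd_mul hcontP.aestronglyMeasurable (ae_of_all _ hPbd)
    exact this.congr (ae_of_all _ fun θ => by ring)
  -- |f w|² = exp(∫ 2u P)
  have hfw : ‖f w‖ ^ 2 = Real.exp (∫ θ, 2 * u θ *
      ((1 - ‖w‖ ^ 2) / ‖Complex.exp (θ * Complex.I) - w‖ ^ 2)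
      ∂circMeasure) := by
    have hbdC : ∀ θ : ℝ, ‖(Complex.exp (θ * Complex.I) + w) /
        (Complex.exp (θ * Complex.I) - w)‖ ≤ (1 + ‖w‖) / (1 - ‖w‖) := by
      intro θ
      rw [norm_div]
      apply div_le_div₀ (by positivity)
      · calc ‖Complex.exp (θ * Complex.I) + w‖
            ≤ ‖Complex.exp (θ * Complex.I)‖ + ‖w‖ :=
              norm_add_le _ _
          _ = 1 + ‖w‖ := by rw [circ_abs]
      · exact hcpos
      · exact circ_lb hw θ
    have hmeasC : AEStronglyMeasurable (fun θ : ℝ =>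
        (Complex.exp (θ * Complex.I) + w) / (Complex.exp (θ * Complex.I) - w)) circMeasure :=
      ((cont_exp_circ.add continuous_const).div (cont_exp_circ.sub continuous_const)
        fun θ => circ_sub_ne hw θ).aestronglyMeasurable
    have hint : Integrable (fun θ : ℝ => ((Complex.exp (θ * Complex.I) + w) /
        (Complex.exp (θ * Complex.I) - w)) * (u θ : ℂ)) circMeasure :=
      hu.ofReal.bdd_mul hmeasC (ae_of_all _ hbdC)
    rw [houter w hw, Complex.norm_exp]
    have hre := Complex.reCLM.integral_comp_comm hint
    simp only [Complex.reCLM_apply] at hre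
    rw [← hre]
    have hpt : ∀ θ : ℝ, (((Complex.exp (θ * Complex.I) + w) /
        (Complex.exp (θ * Complex.I) - w)) * (u θ : ℂ)).re
        = u θ * ((1 - ‖w‖ ^ 2) /
          ‖Complex.exp (θ * Complex.I) - w‖ ^ 2) := by
      intro θ
      rw [mul_comm, Complex.re_ofReal_mul, poisson_re hw θ]
    rw [integral_congr_ae (ae_of_all _ hpt)]
    have h2 : (∫ θ, 2 * u θ *
        ((1 - ‖w‖ ^ 2) / ‖Complex.exp (θ * Complex.I) - w‖ ^ 2)
        ∂circMeasure) = 2 * ∫ θ, u θ *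
        ((1 - ‖w‖ ^ 2) / ‖Complex.exp (θ * Complex.I) - w‖ ^ 2)
        ∂circMeasure := by
      rw [← integral_const_mul]
      exact integral_congr_ae (ae_of_all _ fun θ => by ring)
    rw [h2, two_mul, Real.exp_add, pow_two]
  -- main computation
  rw [hfw] at *
  rw [← integral_const_mul]
  have hpt2 : ∀ θ : ℝ, (1 - ‖w‖ ^ 2) *
      ((Real.exp (2 * u θ) - Real.exp (∫ θ, 2 * u θ *
        ((1 - ‖w‖ ^ 2) / ‖Complex.exp (θ * Complex.I) - w‖ ^ 2)
        ∂circMeasure)) / ‖Complex.exp (θ * Complex.I) - w‖ ^ 2)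
      = Real.exp (2 * u θ) *
        ((1 - ‖w‖ ^ 2) / ‖Complex.exp (θ * Complex.I) - w‖ ^ 2)
      - Real.exp (∫ θ, 2 * u θ *
        ((1 - ‖w‖ ^ 2) / ‖Complex.exp (θ * Complex.I) - w‖ ^ 2)
        ∂circMeasure) *
        ((1 - ‖w‖ ^ 2) / ‖Complex.exp (θ * Complex.I) - w‖ ^ 2) := by
    intro θ
    have hne : ‖Complex.exp (θ * Complex.I) - w‖ ^ 2 ≠ 0 :=
      (pow_pos (circ_abs_pos hw θ) 2).ne'
    ring
  rw [integral_congr_ae (ae_of_all _ hpt2)]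
  rw [integral_sub hEP (hPint.const_mul _), integral_const_mul, poisson_integral_one hw,
    mul_one]
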